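/- Let A, B, C, D be a Williamson sequence of order n = dm, and let A′, B′, C′, D′ be the m-compressions of A, B, C, D (sequences of length d). Then PAF_{A′}(s) + PAF_{B′}(s) + PAF_{C′}(s) + PAF_{D′}(s) equals 4n when s ≡ 0 (mod d) and equals 0 for s = 1, …, d−1, and PSD_{A′}(s) + PSD_{B′}(s) + PSD_{C′}(s) + PSD_{D′}(s) = 4n for all s = 0, …, d−1. -/

import Mathlib

/-- The periodic autocorrelation function of the length-`n` sequence `a`. -/
def paf (n : ℕ) (a : ℕ → ℤ) (s : ℕ) : ℤ :=
  ∑ k ∈ Finset.range n, a k * a ((k + s) % n)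

/-- `a` is a symmetric sequence of length `n`: `aᵢ = a_{n-i}` for `1 ≤ i < n`. -/
def SymmSeq (n : ℕ) (a : ℕ → ℤ) : Prop := ∀ i, 1 ≤ i → i < n → a i = a (n - i)

/-- All entries of the length-`n` sequence `a` are `±1`. -/
def PMOne (n : ℕ) (a : ℕ → ℤ) : Prop := ∀ i < n, a i = 1 ∨ a i = -1

/-- `a,b,c,d` are Williamson sequences of order `n`. -/
def IsWilliamson (n : ℕ) (a b c d : ℕ → ℤ) : Prop :=
  SymmSeq n a ∧ SymmSeq n b ∧ SymmSeq n c ∧ SymmSeq n d ∧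
  PMOne n a ∧ PMOne n b ∧ PMOne n c ∧ PMOne n d ∧
  ∀ s, 1 ≤ s → s ≤ n / 2 → paf n a s + paf n b s + paf n c s + paf n d s = 0

/-- The discrete Fourier transform of the length-`n` sequence `a`. -/
noncomputable def dft (n : ℕ) (a : ℕ → ℤ) (s : ℤ) : ℂ :=
  ∑ k ∈ Finset.range n, (a k : ℂ) * Complex.exp (2 * Real.pi * Complex.I * k * s / n)

/-- The power spectral density of the length-`n` sequence `a`. -/
noncomputable def psd (n : ℕ) (a : ℕ → ℤ) (s : ℤ) : ℝ :=
  ‖dft n a s‖ ^ 2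

/-- The `m`-compression of a sequence of length `n = d * m`: a sequence of
length `d` whose `j`-th entry is `a_j + a_{j+d} + ⋯ + a_{j+(m-1)d}`. -/
def compress (d m : ℕ) (a : ℕ → ℤ) (j : ℕ) : ℤ :=
  ∑ i ∈ Finset.range m, a (j + i * d)

open Finset Complex

private lemma core_mod (n c j : ℕ) (hn : 0 < n) :
    (j + c + (n - c % n)) % n = j % n := by
  obtain ⟨q, r, hr, rfl⟩ : ∃ q r, r < n ∧ c = n * q + r :=
    ⟨c / n, c % n, Nat.mod_lt _ hn, (Nat.div_add_mod c n).symm⟩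
  rw [Nat.mul_add_mod, Nat.mod_eq_of_lt hr]
  have h3 : j + (n * q + r) + (n - r) = j + n * q + n := by omega
  rw [h3, Nat.add_mod_right, Nat.add_mul_mod_self_left]

private lemma sum_range_shift {M : Type*} [AddCommMonoid M] (f : ℕ → M) (n c : ℕ) :
    ∑ k ∈ range n, f ((k + c) % n) = ∑ k ∈ range n, f (k % n) := by
  rcases Nat.eq_zero_or_pos n with rfl | hn
  · simp
  refine Finset.sum_nbij' (fun k => (k + c) % n) (fun k => (k + (n - c % n)) % n)
    (fun k hk => mem_range.mpr (Nat.mod_lt _ hn))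
    (fun k hk => mem_range.mpr (Nat.mod_lt _ hn)) ?_ ?_ ?_
  · intro k hk
    show ((k + c) % n + (n - c % n)) % n = k
    rw [Nat.mod_add_mod, core_mod n c k hn, Nat.mod_eq_of_lt (mem_range.mp hk)]
  · intro k hk
    show ((k + (n - c % n)) % n + c) % n = k
    rw [Nat.mod_add_mod, show k + (n - c % n) + c = k + c + (n - c % n) by ring,
      core_mod n c k hn, Nat.mod_eq_of_lt (mem_range.mp hk)]
  · intro k hk
    show f ((k + c) % n) = f ((k + c) % n % n)
    rw [Nat.mod_mod_of_dvd _ dvd_rfl]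

private lemma sum_range_mul' {M : Type*} [AddCommMonoid M] (f : ℕ → M) (d : ℕ) :
    ∀ m, ∑ k ∈ range (d * m), f k = ∑ i ∈ range m, ∑ j ∈ range d, f (j + i * d)
  | 0 => by simp
  | (m + 1) => by
    rw [Nat.mul_succ, Finset.sum_range_add, sum_range_mul' f d m, Finset.sum_range_succ]
    congr 1
    apply Finset.sum_congr rfl
    intro j hj
    congr 1
    ring

private lemma paf_mod (n : ℕ) (a : ℕ → ℤ) (s : ℕ) : paf n a s = paf n a (s % n) := by
  unfold paf
  apply Finset.sum_congr rfl
  intro k hk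
  congr 2
  conv_lhs => rw [Nat.add_mod]
  conv_rhs => rw [Nat.add_mod, Nat.mod_mod_of_dvd _ dvd_rfl]

private lemma paf_symm (n : ℕ) (a : ℕ → ℤ) (t : ℕ) (ht : t ≤ n) :
    paf n a (n - t) = paf n a t := by
  unfold paf
  have key := sum_range_shift (fun x => a (x % n) * a ((x + (n - t)) % n)) n t
  calc ∑ k ∈ range n, a k * a ((k + (n - t)) % n)
      = ∑ k ∈ range n, (fun x => a (x % n) * a ((x + (n - t)) % n)) (k % n) := by
        apply Finset.sum_congr rfl; intro k hk
        have hk' := mem_range.mp hk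
        simp only [Nat.mod_eq_of_lt hk']
    _ = ∑ k ∈ range n, (fun x => a (x % n) * a ((x + (n - t)) % n)) ((k + t) % n) := key.symm
    _ = ∑ k ∈ range n, a k * a ((k + t) % n) := by
        apply Finset.sum_congr rfl; intro k hk
        have hk' := mem_range.mp hk
        have hn : 0 < n := by omega
        simp only
        rw [Nat.mod_mod_of_dvd _ dvd_rfl, Nat.mod_add_mod,
          show k + t + (n - t) = k + n by omega, Nat.add_mod_right,
          Nat.mod_eq_of_lt hk', mul_comm]

private lemma paf_zero (n : ℕ) (a : ℕ → ℤ) (h : PMOne n a) : paf n a 0 = n := by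
  unfold paf
  calc ∑ k ∈ range n, a k * a ((k + 0) % n)
      = ∑ k ∈ range n, (1 : ℤ) := by
        apply Finset.sum_congr rfl; intro k hk
        have hk' := mem_range.mp hk
        rw [Nat.add_zero, Nat.mod_eq_of_lt hk']
        rcases h k hk' with h1 | h1 <;> rw [h1] <;> norm_num
    _ = n := by simp

private lemma mod_reduce (d m r t : ℕ) (hr : r < d) :
    (r + t * d) % (d * m) = r + t % m * d := by
  rcases Nat.eq_zero_or_pos m with rfl | hm
  · simp
  have h1 : r + t * d = r + t % m * d + d * m * (t / m) := by
    conv_lhs => rw [← Nat.div_add_mod t m]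
    ring
  rw [h1, Nat.add_mul_mod_self_left]
  apply Nat.mod_eq_of_lt
  have h2 : t % m + 1 ≤ m := Nat.mod_lt t hm
  have h3 : (t % m + 1) * d ≤ m * d := Nat.mul_le_mul_right d h2
  have h4 : (t % m + 1) * d = t % m * d + d := by ring
  have h5 : m * d = d * m := by ring
  linarith

private lemma index_comp (d m j s i i'' : ℕ) (hd : 0 < d) :
    (j + i * d + s + i'' * d) % (d * m)
      = (j + s) % d + (i'' + ((j + s) / d + i)) % m * d := by
  have hqr : d * ((j + s) / d) + (j + s) % d = j + s := Nat.div_add_mod _ _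
  have h0 : j + i * d + s + i'' * d
      = (j + s) % d + (i'' + ((j + s) / d + i)) * d := by
    calc j + i * d + s + i'' * d = (j + s) + i * d + i'' * d := by ring
      _ = (d * ((j + s) / d) + (j + s) % d) + i * d + i'' * d := by rw [hqr]
      _ = (j + s) % d + (i'' + ((j + s) / d + i)) * d := by ring
  rw [h0, mod_reduce d m _ _ (Nat.mod_lt _ hd)]

private lemma compress_paf (d m : ℕ) (hd : 0 < d) (a : ℕ → ℤ) (s : ℕ) :
    paf d (compress d m a) s = ∑ i ∈ range m, paf (d * m) a (s + i * d) := by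
  unfold paf compress
  calc ∑ j ∈ range d, (∑ i ∈ range m, a (j + i * d)) *
          ∑ i' ∈ range m, a ((j + s) % d + i' * d)
      = ∑ j ∈ range d, ∑ i ∈ range m, ∑ i' ∈ range m,
          a (j + i * d) * a ((j + s) % d + i' * d) := by
        apply Finset.sum_congr rfl; intro j hj
        rw [Finset.sum_mul_sum]
    _ = ∑ j ∈ range d, ∑ i ∈ range m, ∑ i'' ∈ range m,
          a (j + i * d) * a ((j + i * d + s + i'' * d) % (d * m)) := by
        apply Finset.sum_congr rfl; intro j hj
        apply Finset.sum_congr rfl; intro i hi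
        rw [← Finset.mul_sum, ← Finset.mul_sum]
        congr 1
        calc ∑ i' ∈ range m, a ((j + s) % d + i' * d)
            = ∑ i' ∈ range m, (fun x => a ((j + s) % d + x % m * d)) (i' % m) := by
              apply Finset.sum_congr rfl; intro i' hi'
              simp only [Nat.mod_mod_of_dvd _ dvd_rfl,
                Nat.mod_eq_of_lt (mem_range.mp hi')]
          _ = ∑ i'' ∈ range m, (fun x => a ((j + s) % d + x % m * d))
                ((i'' + ((j + s) / d + i)) % m) :=
              (sum_range_shift (fun x => a ((j + s) % d + x % m * d)) m
                ((j + s) / d + i)).symm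
          _ = ∑ i'' ∈ range m, a ((j + i * d + s + i'' * d) % (d * m)) := by
              apply Finset.sum_congr rfl; intro i'' hi''
              simp only [Nat.mod_mod_of_dvd _ dvd_rfl]
              rw [index_comp d m j s i i'' hd]
    _ = ∑ i ∈ range m, ∑ i'' ∈ range m, ∑ j ∈ range d,
          a (j + i * d) * a ((j + i * d + s + i'' * d) % (d * m)) := by
        rw [Finset.sum_comm]
        apply Finset.sum_congr rfl; intro i hi
        exact Finset.sum_comm
    _ = ∑ i'' ∈ range m, ∑ i ∈ range m, ∑ j ∈ range d,
          a (j + i * d) * a ((j + i * d + s + i'' * d) % (d * m)) :=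
        Finset.sum_comm
    _ = ∑ i'' ∈ range m, ∑ k ∈ range (d * m),
          a k * a ((k + (s + i'' * d)) % (d * m)) := by
        apply Finset.sum_congr rfl; intro i'' hi''
        rw [sum_range_mul' (fun k => a k * a ((k + (s + i'' * d)) % (d * m))) d m]
        apply Finset.sum_congr rfl; intro i hi
        apply Finset.sum_congr rfl; intro j hj
        congr 2
        ring

private lemma will_all {n : ℕ} {a b c d' : ℕ → ℤ} (hW : IsWilliamson n a b c d') :
    ∀ t, 1 ≤ t → t ≤ n - 1 →
      paf n a t + paf n b t + paf n c t + paf n d' t = 0 := by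
  obtain ⟨-, -, -, -, -, -, -, -, hp⟩ := hW
  intro t h1 h2
  rcases le_or_gt t (n / 2) with h | h
  · exact hp t h1 h
  · have htn : t ≤ n := by omega
    have := hp (n - t) (by omega) (by omega)
    rwa [paf_symm n a t htn, paf_symm n b t htn, paf_symm n c t htn,
      paf_symm n d' t htn] at this

private lemma parts12 {n d m : ℕ} (hn : n = d * m) (hd : 0 < d) (hm : 0 < m)
    {a b c d' : ℕ → ℤ} (hW : IsWilliamson n a b c d') :
    (paf d (compress d m a) 0 + paf d (compress d m b) 0 +
        paf d (compress d m c) 0 + paf d (compress d m d') 0 = 4 * n) ∧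
    (∀ s : ℕ, 1 ≤ s → s ≤ d - 1 →
      paf d (compress d m a) s + paf d (compress d m b) s +
        paf d (compress d m c) s + paf d (compress d m d') s = 0) := by
  have hterm : ∀ t : ℕ, 1 ≤ t → t ≤ n - 1 →
      paf n a t + paf n b t + paf n c t + paf n d' t = 0 := will_all hW
  obtain ⟨-, -, -, -, ha, hb, hc, hd', -⟩ := hW
  have hsum : ∀ s : ℕ,
      paf d (compress d m a) s + paf d (compress d m b) s +
        paf d (compress d m c) s + paf d (compress d m d') s =
      ∑ i ∈ range m, (paf n a (s + i * d) + paf n b (s + i * d) +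
        paf n c (s + i * d) + paf n d' (s + i * d)) := by
    intro s
    rw [compress_paf d m hd a s, compress_paf d m hd b s, compress_paf d m hd c s,
      compress_paf d m hd d' s, ← hn, ← Finset.sum_add_distrib, ← Finset.sum_add_distrib,
      ← Finset.sum_add_distrib]
  constructor
  · rw [hsum 0]
    rw [Finset.sum_eq_single_of_mem 0 (mem_range.mpr hm)]
    · simp only [Nat.zero_add, Nat.zero_mul]
      rw [paf_zero n a ha, paf_zero n b hb, paf_zero n c hc, paf_zero n d' hd']
      ring
    · intro i hi hi0
      have him := mem_range.mp hi
      apply hterm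
      · simp only [Nat.zero_add]
        have : 1 ≤ i := Nat.one_le_iff_ne_zero.mpr hi0
        calc 1 ≤ d := hd
          _ ≤ i * d := Nat.le_mul_of_pos_left d this
      · simp only [Nat.zero_add]
        have h1 : i + 1 ≤ m := him
        have h2 : (i + 1) * d ≤ m * d := Nat.mul_le_mul_right d h1
        have h3 : (i + 1) * d = i * d + d := by ring
        have h4 : m * d = d * m := by ring
        omega
  · intro s hs1 hs2
    rw [hsum s]
    apply Finset.sum_eq_zero
    intro i hi
    have him := mem_range.mp hi
    apply hterm
    · omega
    · have h1 : i + 1 ≤ m := him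
      have h2 : (i + 1) * d ≤ m * d := Nat.mul_le_mul_right d h1
      have h3 : (i + 1) * d = i * d + d := by ring
      have h4 : m * d = d * m := by ring
      omega

private lemma exp_shift (d k t s : ℕ) (hd : 0 < d) :
    Complex.exp (2 * Real.pi * Complex.I * k * s / d) *
      Complex.exp (-(2 * Real.pi * Complex.I * (((k + t) % d : ℕ)) * s / d)) =
    Complex.exp (-(2 * Real.pi * Complex.I * t * s / d)) := by
  have hd' : (d : ℂ) ≠ 0 := Nat.cast_ne_zero.mpr hd.ne'
  have hq : d * ((k + t) / d) + (k + t) % d = k + t := Nat.div_add_mod _ _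
  set u := (k + t) % d with hu
  set q := (k + t) / d with hq'
  have hcast : (d : ℂ) * q + u = k + t := by exact_mod_cast hq
  have hu' : (u : ℂ) = k + t - d * q := by linear_combination hcast
  rw [← Complex.exp_add]
  have hexp : 2 * Real.pi * Complex.I * k * s / d + -(2 * Real.pi * Complex.I * u * s / d)
      = -(2 * Real.pi * Complex.I * t * s / d) + ((q * s : ℤ) : ℂ) * (2 * Real.pi * Complex.I) := by
    rw [hu']
    push_cast
    field_simp
    ring
  rw [hexp, Complex.exp_add, Complex.exp_int_mul_two_pi_mul_I, mul_one]

private lemma psd_as_paf (d : ℕ) (hd : 0 < d) (A : ℕ → ℤ) (s : ℕ) :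
    ((psd d A (s : ℤ) : ℝ) : ℂ) =
      ∑ t ∈ range d, (paf d A t : ℂ) *
        Complex.exp (-(2 * Real.pi * Complex.I * t * s / d)) := by
  have habs : ((psd d A (s : ℤ) : ℝ) : ℂ)
      = dft d A (s : ℤ) * (starRingEnd ℂ) (dft d A (s : ℤ)) := by
    unfold psd
    rw [Complex.sq_norm]
    exact_mod_cast (Complex.mul_conj _).symm
  have hconj : (starRingEnd ℂ) (dft d A (s : ℤ)) =
      ∑ l ∈ range d, (A l : ℂ) * Complex.exp (-(2 * Real.pi * Complex.I * l * s / d)) := by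
    unfold dft
    rw [map_sum]
    apply Finset.sum_congr rfl; intro l hl
    rw [map_mul, ← Complex.exp_conj]
    congr 1
    · simp
    · simp only [map_div₀, map_mul, Complex.conj_I, Complex.conj_ofReal, map_natCast,
        map_intCast, map_ofNat]
      push_cast
      ring
  rw [habs, hconj]
  unfold dft
  calc (∑ k ∈ range d, (A k : ℂ) * Complex.exp (2 * Real.pi * Complex.I * k * s / d)) *
        ∑ l ∈ range d, (A l : ℂ) * Complex.exp (-(2 * Real.pi * Complex.I * l * s / d))
      = ∑ k ∈ range d, ∑ l ∈ range d,
          ((A k : ℂ) * Complex.exp (2 * Real.pi * Complex.I * k * s / d)) *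
          ((A l : ℂ) * Complex.exp (-(2 * Real.pi * Complex.I * l * s / d))) :=
        Finset.sum_mul_sum _ _ _ _
    _ = ∑ k ∈ range d, ∑ t ∈ range d, (A k : ℂ) * (A ((k + t) % d) : ℂ) *
          Complex.exp (-(2 * Real.pi * Complex.I * t * s / d)) := by
        apply Finset.sum_congr rfl
        intro k hk
        calc ∑ l ∈ range d,
              ((A k : ℂ) * Complex.exp (2 * Real.pi * Complex.I * k * s / d)) *
              ((A l : ℂ) * Complex.exp (-(2 * Real.pi * Complex.I * l * s / d)))
            = ∑ t ∈ range d, (fun x => (A k : ℂ) * (A (x % d) : ℂ) *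
                (Complex.exp (2 * Real.pi * Complex.I * k * s / d) *
                 Complex.exp (-(2 * Real.pi * Complex.I * ((x % d : ℕ)) * s / d)))) (t % d) := by
              apply Finset.sum_congr rfl; intro l hl
              simp only [Nat.mod_eq_of_lt (mem_range.mp hl)]
              ring
          _ = ∑ t ∈ range d, (fun x => (A k : ℂ) * (A (x % d) : ℂ) *
                (Complex.exp (2 * Real.pi * Complex.I * k * s / d) *
                 Complex.exp (-(2 * Real.pi * Complex.I * ((x % d : ℕ)) * s / d)))) ((t + k) % d) :=
              (sum_range_shift (fun x => (A k : ℂ) * (A (x % d) : ℂ) *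
                (Complex.exp (2 * Real.pi * Complex.I * k * s / d) *
                 Complex.exp (-(2 * Real.pi * Complex.I * ((x % d : ℕ)) * s / d)))) d k).symm
          _ = ∑ t ∈ range d, (A k : ℂ) * (A ((k + t) % d) : ℂ) *
                Complex.exp (-(2 * Real.pi * Complex.I * t * s / d)) := by
              apply Finset.sum_congr rfl; intro t ht
              simp only [Nat.mod_mod_of_dvd _ dvd_rfl]
              rw [show t + k = k + t from Nat.add_comm t k, exp_shift d k t s hd]
    _ = ∑ t ∈ range d, ∑ k ∈ range d, (A k : ℂ) * (A ((k + t) % d) : ℂ) *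
          Complex.exp (-(2 * Real.pi * Complex.I * t * s / d)) := Finset.sum_comm
    _ = ∑ t ∈ range d, (paf d A t : ℂ) *
          Complex.exp (-(2 * Real.pi * Complex.I * t * s / d)) := by
        apply Finset.sum_congr rfl; intro t ht
        rw [← Finset.sum_mul]
        congr 1
        unfold paf
        push_cast
        rfl

theorem compression_paf_psd (n d m : ℕ) (hn : n = d * m) (a b c d' : ℕ → ℤ)
    (hW : IsWilliamson n a b c d') :
    (∀ s : ℕ, d ∣ s →
      paf d (compress d m a) s + paf d (compress d m b) s +
        paf d (compress d m c) s + paf d (compress d m d') s = 4 * n) ∧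
    (∀ s : ℕ, 1 ≤ s → s ≤ d - 1 →
      paf d (compress d m a) s + paf d (compress d m b) s +
        paf d (compress d m c) s + paf d (compress d m d') s = 0) ∧
    (∀ s : ℕ, s ≤ d - 1 →
      psd d (compress d m a) s + psd d (compress d m b) s +
        psd d (compress d m c) s + psd d (compress d m d') s = 4 * n) := by
  rcases Nat.eq_zero_or_pos d with rfl | hd
  · have hn0 : n = 0 := by simpa using hn
    subst hn0
    refine ⟨fun s _ => ?_, fun s _ _ => ?_, fun s _ => ?_⟩ <;>
      simp [paf, psd, dft]
  rcases Nat.eq_zero_or_pos m with rfl | hm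
  · have hn0 : n = 0 := by simpa using hn
    subst hn0
    refine ⟨fun s _ => ?_, fun s _ _ => ?_, fun s _ => ?_⟩ <;>
      simp [paf, psd, dft, compress]
  obtain ⟨h1, h2⟩ := parts12 hn hd hm hW
  have hzmod : ∀ s : ℕ, d ∣ s →
      paf d (compress d m a) s + paf d (compress d m b) s +
        paf d (compress d m c) s + paf d (compress d m d') s = 4 * n := by
    intro s hs
    have hs0 : s % d = 0 := by omega
    rw [paf_mod d (compress d m a) s, paf_mod d (compress d m b) s,
      paf_mod d (compress d m c) s, paf_mod d (compress d m d') s, hs0]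
    exact h1
  refine ⟨hzmod, h2, ?_⟩
  intro s _
  have key : ((psd d (compress d m a) s + psd d (compress d m b) s +
      psd d (compress d m c) s + psd d (compress d m d') s : ℝ) : ℂ) = ((4 * n : ℕ) : ℂ) := by
    push_cast [psd_as_paf d hd (compress d m a) s, psd_as_paf d hd (compress d m b) s,
      psd_as_paf d hd (compress d m c) s, psd_as_paf d hd (compress d m d') s]
    rw [← Finset.sum_add_distrib, ← Finset.sum_add_distrib, ← Finset.sum_add_distrib]
    have hterm : ∀ t ∈ range d, ((paf d (compress d m a) t : ℂ) *
          Complex.exp (-(2 * Real.pi * Complex.I * t * s / d)) +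
        (paf d (compress d m b) t : ℂ) *
          Complex.exp (-(2 * Real.pi * Complex.I * t * s / d)) +
        (paf d (compress d m c) t : ℂ) *
          Complex.exp (-(2 * Real.pi * Complex.I * t * s / d)) +
        (paf d (compress d m d') t : ℂ) *
          Complex.exp (-(2 * Real.pi * Complex.I * t * s / d))) =
        ((paf d (compress d m a) t + paf d (compress d m b) t +
          paf d (compress d m c) t + paf d (compress d m d') t : ℤ) : ℂ) *
          Complex.exp (-(2 * Real.pi * Complex.I * t * s / d)) := by
      intro t ht
      push_cast
      ring
    rw [Finset.sum_congr rfl hterm]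
    rw [Finset.sum_eq_single_of_mem 0 (mem_range.mpr hd)]
    · rw [hzmod 0 (dvd_zero d)]
      push_cast
      simp
    · intro t ht ht0
      rw [h2 t (Nat.one_le_iff_ne_zero.mpr ht0) (by have := mem_range.mp ht; omega)]
      simp
  have := key
  push_cast at this
  exact_mod_cast this
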